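/- The 2-cochain τ on gl_l ⊗ C_q defined by τ(E_{ij}⊗s^{m1}t^{n1}, E_{kn}⊗s^{m2}t^{n2}) = δ_{jk} δ_{in} δ_{m1+m2,0} δ_{n1+n2,0} q^{n1 m2} (m1·c_s + n1·c_t), valued in the abelian Lie algebra C c_s ⊕ C c_t, is a Lie algebra 2-cocycle; hence gl_l⊗C_q ⊕ C c_s ⊕ C c_t with the bracket [x+z, x'+z'] = [x,x'] + τ(x,x') is a Lie algebra (a central extension of gl_l ⊗ C_q). -/

import Mathlib

/-- The space `gl_l ⊗ ℂ_q`, with basis `E_{ij} ⊗ s^m t^n` indexed by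
`((i,j),(m,n)) ∈ (Fin l × Fin l) × (ℤ × ℤ)`. -/
abbrev G (l : ℕ) := ((Fin l × Fin l) × ℤ × ℤ) →₀ ℂ

/-- The basis element `E_{ij} ⊗ s^m t^n`. -/
noncomputable def basisElt (l : ℕ) (i j : Fin l) (m n : ℤ) : G l :=
  Finsupp.single ((i, j), (m, n)) 1

/-- The bracket on `gl_l ⊗ ℂ_q`, defined bilinearly from
`[E_{ij}⊗s^{m1}t^{n1}, E_{kn}⊗s^{m2}t^{n2}]
  = δ_{jk} q^{n1 m2} E_{in}⊗s^{m1+m2}t^{n1+n2} − δ_{in} q^{n2 m1} E_{kj}⊗s^{m1+m2}t^{n1+n2}`. -/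
noncomputable def brkt (l : ℕ) (q : ℂ) (x y : G l) : G l :=
  x.sum fun a ca => y.sum fun b cb =>
    (ca * cb) •
      ((if a.1.2 = b.1.1 then
          q ^ (a.2.2 * b.2.1) • basisElt l a.1.1 b.1.2 (a.2.1 + b.2.1) (a.2.2 + b.2.2)
        else 0)
      - (if a.1.1 = b.1.2 then
          q ^ (b.2.2 * a.2.1) • basisElt l b.1.1 a.1.2 (a.2.1 + b.2.1) (a.2.2 + b.2.2)
        else 0))

/-- The 2-cochain `τ` with values in `ℂ c_s ⊕ ℂ c_t ≅ ℂ × ℂ`, defined bilinearly from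
`τ(E_{ij}⊗s^{m1}t^{n1}, E_{kn}⊗s^{m2}t^{n2})
  = δ_{jk} δ_{in} δ_{m1+m2,0} δ_{n1+n2,0} q^{n1 m2} (m1·c_s + n1·c_t)`. -/
noncomputable def tau (l : ℕ) (q : ℂ) (x y : G l) : ℂ × ℂ :=
  x.sum fun a ca => y.sum fun b cb =>
    (ca * cb) •
      (if a.1.2 = b.1.1 ∧ a.1.1 = b.1.2 ∧ a.2.1 + b.2.1 = 0 ∧ a.2.2 + b.2.2 = 0 then
        q ^ (a.2.2 * b.2.1) • ((a.2.1 : ℂ), (a.2.2 : ℂ))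
      else 0)

/-- The bracket on the central extension `gl_l⊗ℂ_q ⊕ ℂ c_s ⊕ ℂ c_t`:
`[x+z, x'+z'] = [x,x'] + τ(x,x')`. -/
noncomputable def brktExt (l : ℕ) (q : ℂ) (u v : G l × (ℂ × ℂ)) : G l × (ℂ × ℂ) :=
  (brkt l q u.1 v.1, tau l q u.1 v.1)

abbrev Idx (l : ℕ) := (Fin l × Fin l) × ℤ × ℤ

noncomputable def lift2 {l : ℕ} {M : Type*} [AddCommGroup M] [Module ℂ M]
    (F : Idx l → Idx l → M) : G l →ₗ[ℂ] G l →ₗ[ℂ] M :=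
  Finsupp.lsum ℂ fun a => LinearMap.toSpanSingleton ℂ _
    (Finsupp.lsum ℂ fun b => LinearMap.toSpanSingleton ℂ M (F a b))

lemma lift2_apply {l : ℕ} {M : Type*} [AddCommGroup M] [Module ℂ M]
    (F : Idx l → Idx l → M) (x y : G l) :
    lift2 F x y = x.sum fun a ca => y.sum fun b cb => (ca * cb) • F a b := by
  simp only [lift2, Finsupp.lsum_apply, Finsupp.sum, LinearMap.coe_sum, Finset.sum_apply,
    LinearMap.toSpanSingleton_apply, LinearMap.smul_apply, Finset.smul_sum, smul_smul]

lemma lift2_single {l : ℕ} {M : Type*} [AddCommGroup M] [Module ℂ M]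
    (F : Idx l → Idx l → M) (a b : Idx l) (ca cb : ℂ) :
    lift2 F (Finsupp.single a ca) (Finsupp.single b cb) = (ca * cb) • F a b := by
  simp [lift2, LinearMap.toSpanSingleton_apply, smul_smul]

lemma lift2_ite_left {l : ℕ} {M : Type*} [AddCommGroup M] [Module ℂ M]
    (F : Idx l → Idx l → M) (P : Prop) [Decidable P] (x y : G l) :
    lift2 F (if P then x else 0) y = if P then lift2 F x y else 0 := by
  split_ifs <;> simp

noncomputable def Fb (l : ℕ) (q : ℂ) (a b : Idx l) : G l :=
  (if a.1.2 = b.1.1 then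
      q ^ (a.2.2 * b.2.1) • basisElt l a.1.1 b.1.2 (a.2.1 + b.2.1) (a.2.2 + b.2.2)
    else 0)
  - (if a.1.1 = b.1.2 then
      q ^ (b.2.2 * a.2.1) • basisElt l b.1.1 a.1.2 (a.2.1 + b.2.1) (a.2.2 + b.2.2)
    else 0)

noncomputable def Ft (l : ℕ) (q : ℂ) (a b : Idx l) : ℂ × ℂ :=
  if a.1.2 = b.1.1 ∧ a.1.1 = b.1.2 ∧ a.2.1 + b.2.1 = 0 ∧ a.2.2 + b.2.2 = 0 then
    q ^ (a.2.2 * b.2.1) • ((a.2.1 : ℂ), (a.2.2 : ℂ))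
  else 0

lemma brkt_eq (l : ℕ) (q : ℂ) (x y : G l) : brkt l q x y = lift2 (Fb l q) x y := by
  rw [lift2_apply]; rfl

lemma tau_eq (l : ℕ) (q : ℂ) (x y : G l) : tau l q x y = lift2 (Ft l q) x y := by
  rw [lift2_apply]; rfl

lemma Fb_antisymm (l : ℕ) (q : ℂ) (a b : Idx l) : Fb l q a b = - Fb l q b a := by
  obtain ⟨⟨i1, j1⟩, m1, n1⟩ := a
  obtain ⟨⟨i2, j2⟩, m2, n2⟩ := b
  simp only [Fb, basisElt, neg_sub]
  rw [show m2 + m1 = m1 + m2 from add_comm _ _, show n2 + n1 = n1 + n2 from add_comm _ _]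
  congr 1
  · exact if_congr eq_comm rfl rfl
  · exact if_congr eq_comm rfl rfl

lemma Ft_antisymm (l : ℕ) (q : ℂ) (a b : Idx l) : Ft l q a b = - Ft l q b a := by
  obtain ⟨⟨i1, j1⟩, m1, n1⟩ := a
  obtain ⟨⟨i2, j2⟩, m2, n2⟩ := b
  simp only [Ft]
  by_cases h : j1 = i2 ∧ i1 = j2 ∧ m1 + m2 = 0 ∧ n1 + n2 = 0
  · obtain ⟨h1, h2, h3, h4⟩ := h
    rw [if_pos ⟨h1, h2, h3, h4⟩, if_pos ⟨h2.symm, h1.symm, by omega, by omega⟩]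
    have hm : m2 = -m1 := by omega
    have hn : n2 = -n1 := by omega
    subst hm hn
    rw [show -n1 * m1 = n1 * -m1 by ring, ← smul_neg]
    congr 1
    push_cast
    simp [Prod.ext_iff]
  · rw [if_neg h, if_neg (fun hc => h ⟨hc.2.1.symm, hc.1.symm, by omega, by omega⟩), neg_zero]

lemma antisym_of_ptwise {l : ℕ} {M : Type*} [AddCommGroup M] [Module ℂ M]
    {F : Idx l → Idx l → M} (h : ∀ a b, F a b = - F b a) (x y : G l) :
    lift2 F x y = - lift2 F y x := by
  induction x using Finsupp.induction_linear with
  | zero => simp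
  | add f g hf hg => simp [map_add, hf, hg]; abel
  | single a ca =>
    induction y using Finsupp.induction_linear with
    | zero => simp
    | add f g hf hg => simp [map_add, hf, hg]; abel
    | single b cb =>
      rw [lift2_single, lift2_single, h a b, smul_neg, mul_comm ca cb]

lemma tau_anti (l : ℕ) (q : ℂ) (x y : G l) : tau l q x y = - tau l q y x := by
  rw [tau_eq, tau_eq]; exact antisym_of_ptwise (Ft_antisymm l q) x y

lemma brkt_anti (l : ℕ) (q : ℂ) (x y : G l) : brkt l q x y = - brkt l q y x := by
  rw [brkt_eq, brkt_eq]; exact antisym_of_ptwise (Fb_antisymm l q) x y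

lemma tri_smul {l : ℕ} {M : Type*} [AddCommGroup M] [Module ℂ M]
    (F1 : Idx l → Idx l → G l) (F2 : Idx l → Idx l → M) (a b c : Idx l) (ca cb cc : ℂ) :
    lift2 F2 (lift2 F1 (Finsupp.single a ca) (Finsupp.single b cb)) (Finsupp.single c cc)
    = (ca * cb * cc) •
      lift2 F2 (lift2 F1 (Finsupp.single a 1) (Finsupp.single b 1)) (Finsupp.single c 1) := by
  rw [lift2_single, lift2_single, one_mul, one_smul]
  have ec : (Finsupp.single c cc : G l) = cc • Finsupp.single c (1 : ℂ) := by
    rw [Finsupp.smul_single, smul_eq_mul, mul_one]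
  rw [ec]
  simp only [map_smul, LinearMap.smul_apply]
  module

lemma jacobi_of_key {l : ℕ} {M : Type*} [AddCommGroup M] [Module ℂ M]
    (F1 : Idx l → Idx l → G l) (F2 : Idx l → Idx l → M)
    (key : ∀ a b c : Idx l,
      lift2 F2 (lift2 F1 (Finsupp.single a 1) (Finsupp.single b 1)) (Finsupp.single c 1)
      + lift2 F2 (lift2 F1 (Finsupp.single b 1) (Finsupp.single c 1)) (Finsupp.single a 1)
      + lift2 F2 (lift2 F1 (Finsupp.single c 1) (Finsupp.single a 1)) (Finsupp.single b 1) = 0)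
    (x y z : G l) :
    lift2 F2 (lift2 F1 x y) z + lift2 F2 (lift2 F1 y z) x + lift2 F2 (lift2 F1 z x) y = 0 := by
  induction x using Finsupp.induction_linear with
  | zero => simp
  | add f g hf hg =>
    have h : (lift2 F2 (lift2 F1 f y) z + lift2 F2 (lift2 F1 y z) f + lift2 F2 (lift2 F1 z f) y)
      + (lift2 F2 (lift2 F1 g y) z + lift2 F2 (lift2 F1 y z) g + lift2 F2 (lift2 F1 z g) y)
        = 0 := by rw [hf, hg, add_zero]
    simp only [map_add, LinearMap.add_apply]
    rw [← h]; abel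
  | single a ca =>
    induction y using Finsupp.induction_linear with
    | zero => simp
    | add f g hf hg =>
      have h : (lift2 F2 (lift2 F1 (Finsupp.single a ca) f) z
          + lift2 F2 (lift2 F1 f z) (Finsupp.single a ca)
          + lift2 F2 (lift2 F1 z (Finsupp.single a ca)) f)
        + (lift2 F2 (lift2 F1 (Finsupp.single a ca) g) z
          + lift2 F2 (lift2 F1 g z) (Finsupp.single a ca)
          + lift2 F2 (lift2 F1 z (Finsupp.single a ca)) g) = 0 := by rw [hf, hg, add_zero]
      simp only [map_add, LinearMap.add_apply]
      rw [← h]; abel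
    | single b cb =>
      induction z using Finsupp.induction_linear with
      | zero => simp
      | add f g hf hg =>
        have h : (lift2 F2 (lift2 F1 (Finsupp.single a ca) (Finsupp.single b cb)) f
            + lift2 F2 (lift2 F1 (Finsupp.single b cb) f) (Finsupp.single a ca)
            + lift2 F2 (lift2 F1 f (Finsupp.single a ca)) (Finsupp.single b cb))
          + (lift2 F2 (lift2 F1 (Finsupp.single a ca) (Finsupp.single b cb)) g
            + lift2 F2 (lift2 F1 (Finsupp.single b cb) g) (Finsupp.single a ca)
            + lift2 F2 (lift2 F1 g (Finsupp.single a ca)) (Finsupp.single b cb)) = 0 := by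
          rw [hf, hg, add_zero]
        simp only [map_add, LinearMap.add_apply]
        rw [← h]; abel
      | single c cc =>
        rw [tri_smul F1 F2 a b c ca cb cc, tri_smul F1 F2 b c a cb cc ca,
          tri_smul F1 F2 c a b cc ca cb,
          show cb * cc * ca = ca * cb * cc by ring, show cc * ca * cb = ca * cb * cc by ring,
          ← smul_add, ← smul_add, key a b c, smul_zero]
set_option maxHeartbeats 1000000 in
lemma key_brkt (l : ℕ) (q : ℂ) (hq : q ≠ 0) (a b c : Idx l) :
    lift2 (Fb l q) (lift2 (Fb l q) (Finsupp.single a 1) (Finsupp.single b 1)) (Finsupp.single c 1)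
    + lift2 (Fb l q) (lift2 (Fb l q) (Finsupp.single b 1) (Finsupp.single c 1)) (Finsupp.single a 1)
    + lift2 (Fb l q) (lift2 (Fb l q) (Finsupp.single c 1) (Finsupp.single a 1)) (Finsupp.single b 1)
    = 0 := by
  obtain ⟨⟨i1, j1⟩, m1, n1⟩ := a
  obtain ⟨⟨i2, j2⟩, m2, n2⟩ := b
  obtain ⟨⟨i3, j3⟩, m3, n3⟩ := c
  simp only [lift2_single, one_mul, one_smul]
  simp only [Fb, basisElt, map_sub, LinearMap.sub_apply, lift2_ite_left, map_smul,
    LinearMap.smul_apply, lift2_single, one_mul, one_smul]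
  simp only [@eq_comm _ i2 j1, @eq_comm _ i3 j2, @eq_comm _ i1 j3,
    @eq_comm _ j2 i1, @eq_comm _ j3 i2, @eq_comm _ j1 i3]
  by_cases h1 : j1 = i2 <;> by_cases h2 : j2 = i3 <;> by_cases h3 : j3 = i1 <;>
    by_cases h4 : i1 = j2 <;> by_cases h5 : i2 = j3 <;> by_cases h6 : i3 = j1 <;>
    (try simp only [eq_true h1]) <;> (try simp only [eq_false h1]) <;>
    (try simp only [eq_true h2]) <;> (try simp only [eq_false h2]) <;>
    (try simp only [eq_true h3]) <;> (try simp only [eq_false h3]) <;>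
    (try simp only [eq_true h4]) <;> (try simp only [eq_false h4]) <;>
    (try simp only [eq_true h5]) <;> (try simp only [eq_false h5]) <;>
    (try simp only [eq_true h6]) <;> (try simp only [eq_false h6]) <;>
    simp only [if_true, if_false, smul_zero, sub_zero, zero_sub, add_zero, zero_add,
      smul_neg, smul_sub, neg_zero] <;>
    (try rfl) <;>
    simp only [smul_smul, ← zpow_add₀ hq] <;> ring_nf <;> module
set_option maxHeartbeats 1000000 in
lemma key_tau (l : ℕ) (q : ℂ) (hq : q ≠ 0) (a b c : Idx l) :
    lift2 (Ft l q) (lift2 (Fb l q) (Finsupp.single a 1) (Finsupp.single b 1)) (Finsupp.single c 1)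
    + lift2 (Ft l q) (lift2 (Fb l q) (Finsupp.single b 1) (Finsupp.single c 1)) (Finsupp.single a 1)
    + lift2 (Ft l q) (lift2 (Fb l q) (Finsupp.single c 1) (Finsupp.single a 1)) (Finsupp.single b 1)
    = 0 := by
  obtain ⟨⟨i1, j1⟩, m1, n1⟩ := a
  obtain ⟨⟨i2, j2⟩, m2, n2⟩ := b
  obtain ⟨⟨i3, j3⟩, m3, n3⟩ := c
  simp only [lift2_single, one_mul, one_smul]
  simp only [Fb, Ft, basisElt, map_sub, LinearMap.sub_apply, lift2_ite_left, map_smul,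
    LinearMap.smul_apply, lift2_single, one_mul, one_smul]
  by_cases hM : m1 + m2 + m3 = 0
  · by_cases hN : n1 + n2 + n3 = 0
    · have hm3 : m3 = -m1 - m2 := by omega
      have hn3 : n3 = -n1 - n2 := by omega
      subst hm3 hn3
      have f1 : (m1 + m2 + (-m1 - m2) = 0) = True := eq_true (by ring)
      have f2 : (m2 + (-m1 - m2) + m1 = 0) = True := eq_true (by ring)
      have f3 : (-m1 - m2 + m1 + m2 = 0) = True := eq_true (by ring)
      have g1 : (n1 + n2 + (-n1 - n2) = 0) = True := eq_true (by ring)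
      have g2 : (n2 + (-n1 - n2) + n1 = 0) = True := eq_true (by ring)
      have g3 : (-n1 - n2 + n1 + n2 = 0) = True := eq_true (by ring)
      simp only [f1, f2, f3, g1, g2, g3, and_true]
      simp only [@eq_comm _ i2 j1, @eq_comm _ i3 j2, @eq_comm _ i1 j3,
        @eq_comm _ j2 i1, @eq_comm _ j3 i2, @eq_comm _ j1 i3]
      by_cases h1 : j1 = i2 <;> by_cases h2 : j2 = i3 <;> by_cases h3 : j3 = i1 <;>
        by_cases h4 : i1 = j2 <;> by_cases h5 : i2 = j3 <;> by_cases h6 : i3 = j1 <;>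
        (try simp only [eq_true h1]) <;> (try simp only [eq_false h1]) <;>
        (try simp only [eq_true h2]) <;> (try simp only [eq_false h2]) <;>
        (try simp only [eq_true h3]) <;> (try simp only [eq_false h3]) <;>
        (try simp only [eq_true h4]) <;> (try simp only [eq_false h4]) <;>
        (try simp only [eq_true h5]) <;> (try simp only [eq_false h5]) <;>
        (try simp only [eq_true h6]) <;> (try simp only [eq_false h6]) <;>
        simp only [if_true, if_false, true_and, false_and, and_true, and_false,
          smul_zero, sub_zero, zero_sub, add_zero, zero_add, smul_neg, neg_zero] <;>
        (try rfl) <;>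
        (try simp only [smul_smul, ← zpow_add₀ hq]) <;>
        simp only [Prod.smul_mk, Prod.mk_add_mk, smul_eq_mul, Prod.neg_mk, Prod.mk_sub_mk, Prod.mk_eq_zero] <;>
        constructor <;> (push_cast; ring)
    · have e1 : (n1 + n2 + n3 = 0) = False := eq_false hN
      have e2 : (n2 + n3 + n1 = 0) = False := eq_false (by omega)
      have e3 : (n3 + n1 + n2 = 0) = False := eq_false (by omega)
      simp [e1, e2, e3]
  · have e1 : (m1 + m2 + m3 = 0) = False := eq_false hM
    have e2 : (m2 + m3 + m1 = 0) = False := eq_false (by omega)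
    have e3 : (m3 + m1 + m2 = 0) = False := eq_false (by omega)
    simp [e1, e2, e3]

lemma tau_cocycle (l : ℕ) (q : ℂ) (hq : q ≠ 0) (x y z : G l) :
    tau l q (brkt l q x y) z + tau l q (brkt l q y z) x + tau l q (brkt l q z x) y = 0 := by
  simp only [tau_eq, brkt_eq]
  exact jacobi_of_key (Fb l q) (Ft l q) (key_tau l q hq) x y z

lemma brkt_jacobi (l : ℕ) (q : ℂ) (hq : q ≠ 0) (x y z : G l) :
    brkt l q (brkt l q x y) z + brkt l q (brkt l q y z) x + brkt l q (brkt l q z x) y = 0 := by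
  simp only [brkt_eq]
  exact jacobi_of_key (Fb l q) (Fb l q) (key_brkt l q hq) x y z

/-- `τ` is a Lie algebra 2-cocycle (antisymmetric and satisfying the cocycle identity);
hence the extended bracket on `gl_l⊗ℂ_q ⊕ ℂ c_s ⊕ ℂ c_t` is antisymmetric and satisfies
the Jacobi identity, so it is a Lie algebra (a central extension of `gl_l ⊗ ℂ_q`). -/
theorem stmt2 (l : ℕ) (hl : 2 ≤ l) (q : ℂ) (hq : q ≠ 0) :
    (∀ x y : G l, tau l q x y = -tau l q y x) ∧
    (∀ x y z : G l,
      tau l q (brkt l q x y) z + tau l q (brkt l q y z) x + tau l q (brkt l q z x) y = 0) ∧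
    (∀ u v : G l × (ℂ × ℂ), brktExt l q u v = -brktExt l q v u) ∧
    (∀ u v w : G l × (ℂ × ℂ),
      brktExt l q (brktExt l q u v) w + brktExt l q (brktExt l q v w) u
        + brktExt l q (brktExt l q w u) v = 0) := by
  refine ⟨tau_anti l q, tau_cocycle l q hq, ?_, ?_⟩
  · intro u v
    have h1 := brkt_anti l q u.1 v.1
    have h2 := tau_anti l q u.1 v.1
    simp only [brktExt, Prod.ext_iff, Prod.fst_neg, Prod.snd_neg, h1, h2, and_self]
  · intro u v w
    simp only [brktExt, Prod.mk_add_mk, Prod.mk_eq_zero]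
    exact ⟨brkt_jacobi l q hq _ _ _, tau_cocycle l q hq _ _ _⟩
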